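/- Let C ⊆ ℝⁿ⁺¹ be a pointed closed semialgebraic convex cone with nonempty interior and C∨ its dual cone. Let x ∈ frontier C with x ≠ 0, and suppose there exists a polynomial p ∈ ℝ[x₀,…,xₙ] vanishing identically on frontier C with ∇p(x) ≠ 0 (x is a regular real point of the algebraic boundary of C). Then the set of supporting functionals at x is an extreme ray of C∨: there exists ℓ₀ ∈ C∨, ℓ₀ ≠ 0, such that {ℓ ∈ C∨ : ⟨ℓ, x⟩ = 0} = {t • ℓ₀ : t ≥ 0}, and ℓ₀ spans an extreme ray of C∨. -/

import Mathlib

open MvPolynomial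

/-- A set is semialgebraic if it is a finite union of basic sets
`{x : p(x) = 0, q₁(x) > 0, …, q_m(x) > 0}`. -/
def IsSemialgebraic {n : ℕ} (S : Set (Fin n → ℝ)) : Prop :=
  ∃ (N : ℕ) (m : Fin N → ℕ)
    (p : Fin N → MvPolynomial (Fin n) ℝ)
    (q : (i : Fin N) → Fin (m i) → MvPolynomial (Fin n) ℝ),
    S = ⋃ i, {x | eval x (p i) = 0 ∧ ∀ j, 0 < eval x (q i j)}

/-- The vanishing ideal of a subset of ℝⁿ. -/
noncomputable def polyVanishingIdeal {n : ℕ} (T : Set (Fin n → ℝ)) : Ideal (MvPolynomial (Fin n) ℝ) where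
  carrier := {p | ∀ x ∈ T, eval x p = 0}
  add_mem' := by
    intro a b ha hb x hx
    simp [map_add, ha x hx, hb x hx]
  zero_mem' := by intro x hx; simp
  smul_mem' := by
    intro c p hp x hx
    simp [smul_eq_mul, hp x hx]

/-- The real zero set of an ideal of polynomials. -/
def realZeroSet {n : ℕ} (I : Ideal (MvPolynomial (Fin n) ℝ)) : Set (Fin n → ℝ) :=
  {x | ∀ p ∈ I, eval x p = 0}

/-- The gradient of a polynomial at a point. -/
noncomputable def grad {n : ℕ} (p : MvPolynomial (Fin n) ℝ) (z : Fin n → ℝ) : Fin n → ℝ :=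
  fun i => eval z (pderiv i p)

/-- The standard inner product on ℝⁿ. -/
def dot {n : ℕ} (a b : Fin n → ℝ) : ℝ := ∑ i, a i * b i

/-- The polar (dual convex body) of a set. -/
def polarBody {n : ℕ} (C : Set (Fin n → ℝ)) : Set (Fin n → ℝ) :=
  {ℓ | ∀ x ∈ C, -1 ≤ dot ℓ x}

/-- The dual cone of a set. -/
def dualCone {n : ℕ} (C : Set (Fin n → ℝ)) : Set (Fin n → ℝ) :=
  {ℓ | ∀ x ∈ C, 0 ≤ dot ℓ x}

/-- A pointed convex cone: convex, closed under nonnegative scaling, containing no line. -/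
def IsPointedCone {n : ℕ} (C : Set (Fin n → ℝ)) : Prop :=
  Convex ℝ C ∧ (∀ x ∈ C, ∀ t : ℝ, 0 ≤ t → t • x ∈ C) ∧ C ∩ (-C) = {0}

/-- A nonzero vector `v` spans an extreme ray of the cone `K` if whenever `y + z = v` with
`y, z ∈ K`, both `y` and `z` are nonnegative multiples of `v`. -/
def SpansExtremeRay {n : ℕ} (K : Set (Fin n → ℝ)) (v : Fin n → ℝ) : Prop :=
  v ≠ 0 ∧ v ∈ K ∧ ∀ y ∈ K, ∀ z ∈ K, y + z = v →
    (∃ t : ℝ, 0 ≤ t ∧ y = t • v) ∧ ∃ t : ℝ, 0 ≤ t ∧ z = t • v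

/-- The span of the gradients at `z` of the polynomials in `P`. -/
noncomputable def gradSpan {n : ℕ} (P : Ideal (MvPolynomial (Fin n) ℝ)) (z : Fin n → ℝ) :
    Submodule ℝ (Fin n → ℝ) :=
  Submodule.span ℝ {v | ∃ p ∈ P, v = grad p z}


section Aux

lemma dot_comm {n : ℕ} (a b : Fin n → ℝ) : dot a b = dot b a :=
  Finset.sum_congr rfl fun i _ => mul_comm _ _

lemma dot_add_right {n : ℕ} (a b c : Fin n → ℝ) : dot a (b + c) = dot a b + dot a c := by
  simp [dot, mul_add, Finset.sum_add_distrib]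

lemma dot_smul_right {n : ℕ} (a : Fin n → ℝ) (s : ℝ) (b : Fin n → ℝ) :
    dot a (s • b) = s * dot a b := by
  simp only [dot, Finset.mul_sum, Pi.smul_apply, smul_eq_mul]
  exact Finset.sum_congr rfl fun i _ => by ring

lemma dot_add_left {n : ℕ} (a b c : Fin n → ℝ) : dot (a + b) c = dot a c + dot b c := by
  rw [dot_comm, dot_add_right, dot_comm c a, dot_comm c b]

lemma dot_smul_left {n : ℕ} (s : ℝ) (a b : Fin n → ℝ) : dot (s • a) b = s * dot a b := by
  rw [dot_comm, dot_smul_right, dot_comm]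

lemma dot_sub_right {n : ℕ} (a b c : Fin n → ℝ) : dot a (b - c) = dot a b - dot a c := by
  simp [dot, mul_sub, Finset.sum_sub_distrib]

lemma dot_sub_left {n : ℕ} (a b c : Fin n → ℝ) : dot (a - b) c = dot a c - dot b c := by
  rw [dot_comm, dot_sub_right, dot_comm c a, dot_comm c b]

lemma dot_neg_right {n : ℕ} (a b : Fin n → ℝ) : dot a (-b) = -dot a b := by
  simp [dot, Finset.sum_neg_distrib]

lemma dot_zero_right {n : ℕ} (a : Fin n → ℝ) : dot a 0 = 0 := by simp [dot]

lemma dot_zero_left {n : ℕ} (a : Fin n → ℝ) : dot 0 a = 0 := by simp [dot]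

lemma dot_self_pos {n : ℕ} {a : Fin n → ℝ} (ha : a ≠ 0) : 0 < dot a a := by
  have h : ∃ i, a i ≠ 0 := by
    by_contra h
    push_neg at h
    exact ha (funext h)
  obtain ⟨i, hi⟩ := h
  exact Finset.sum_pos' (fun j _ => mul_self_nonneg _)
    ⟨i, Finset.mem_univ i, mul_self_pos.mpr hi⟩

lemma eq_of_dot_self_sub {n : ℕ} {a b : Fin n → ℝ} (h : dot (a - b) (a - b) = 0) : a = b := by
  by_contra hne
  exact absurd h (ne_of_gt (dot_self_pos (sub_ne_zero.mpr hne)))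

noncomputable def dotCLM {n : ℕ} (w : Fin n → ℝ) : (Fin n → ℝ) →L[ℝ] ℝ :=
  LinearMap.toContinuousLinearMap
    { toFun := fun v => dot w v
      map_add' := fun a b => dot_add_right w a b
      map_smul' := fun s v => by simpa using dot_smul_right w s v }

lemma dotCLM_apply {n : ℕ} (w v : Fin n → ℝ) : dotCLM w v = dot w v := rfl

lemma hasFDerivAt_eval {n : ℕ} (p : MvPolynomial (Fin n) ℝ) (z : Fin n → ℝ) :
    HasFDerivAt (fun y : Fin n → ℝ => eval y p) (dotCLM (grad p z)) z := by
  induction p using MvPolynomial.induction_on with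
  | C a =>
      have h0 : dotCLM (grad (C a : MvPolynomial (Fin n) ℝ) z) = 0 := by
        ext v
        simp [dotCLM_apply, grad, pderiv_C, dot]
      rw [h0]
      simpa using hasFDerivAt_const (a : ℝ) z
  | add q r hq hr =>
      have h0 : dotCLM (grad (q + r) z) = dotCLM (grad q z) + dotCLM (grad r z) := by
        ext v
        have : grad (q + r) z = grad q z + grad r z := by
          funext i; simp [grad, map_add]
        simp [dotCLM_apply, this, dot_add_left]
      rw [h0]
      exact (hq.add hr).congr_of_eventuallyEq (by filter_upwards with y; simp)
  | mul_X q i hq =>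
      have h2 : HasFDerivAt (fun y : Fin n → ℝ => y i) (dotCLM (Pi.single i 1)) z := by
        have : (fun y : Fin n → ℝ => y i) = fun y => dotCLM (Pi.single i 1) y := by
          funext y
          simp [dotCLM_apply, dot, Pi.single_apply, ite_mul]
        rw [this]
        exact (dotCLM (Pi.single i 1)).hasFDerivAt
      have hmul := hq.mul h2
      have h0 : dotCLM (grad (q * X i) z)
          = eval z q • dotCLM (Pi.single i 1) + z i • dotCLM (grad q z) := by
        ext v
        simp only [dotCLM_apply, ContinuousLinearMap.add_apply, ContinuousLinearMap.smul_apply,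
          smul_eq_mul, dot, grad, pderiv_mul, map_add, map_mul, eval_X, Finset.mul_sum]
        rw [← Finset.sum_add_distrib]
        refine Finset.sum_congr rfl fun j _ => ?_
        rcases eq_or_ne j i with rfl | hne
        · simp [pderiv_X_self]; ring
        · simp [pderiv_X_of_ne hne.symm, Pi.single_apply, hne.symm]
          ring
      rw [h0]
      exact hmul.congr_of_eventuallyEq (by filter_upwards with y; simp)

lemma exists_frontier_param {n : ℕ} {C : Set (Fin n → ℝ)} (hC : IsClosed C) (hconv : Convex ℝ C)
    {x e : Fin n → ℝ} (hx : x ∈ C) {r : ℝ} (hr : 0 < r) (hball : Metric.ball e r ⊆ C)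
    {l : Fin n → ℝ} (hl : ∀ c ∈ C, 0 ≤ dot l c) (hlx : dot l x = 0)
    (hld : 0 < dot l (e - x)) {u : Fin n → ℝ} (hu : dot l u = 0) (hune : u ≠ 0)
    (hur : 2 * ‖u‖ ≤ r) :
    ∃ s : ℝ, 0 ≤ s ∧ s ≤ 2 * ‖u‖ / r ∧ x + u + s • (e - x) ∈ frontier C := by
  have hu0 : 0 < ‖u‖ := norm_pos_iff.mpr hune
  set t : ℝ := 2 * ‖u‖ / r with ht_def
  have ht0 : 0 < t := by positivity
  have ht1 : t ≤ 1 := by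
    rw [ht_def, div_le_one hr]; linarith
  have hyC : x + u + t • (e - x) ∈ C := by
    have hy : e + t⁻¹ • u ∈ C := by
      apply hball
      rw [Metric.mem_ball, dist_self_add_left, norm_smul, norm_inv, Real.norm_eq_abs,
        abs_of_pos ht0]
      rw [inv_mul_lt_iff₀ ht0]
      have htr : t * r = 2 * ‖u‖ := div_mul_cancel₀ _ (ne_of_gt hr)
      linarith
    have := hconv hx hy (by linarith : (0:ℝ) ≤ 1 - t) (le_of_lt ht0) (by ring)
    have heq : (1 - t) • x + t • (e + t⁻¹ • u) = x + u + t • (e - x) := by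
      rw [smul_add, smul_smul, mul_inv_cancel₀ (ne_of_gt ht0)]
      module
    rwa [heq] at this
  set A : Set ℝ := {s : ℝ | x + u + s • (e - x) ∈ C} with hA_def
  have hAne : A.Nonempty := ⟨t, hyC⟩
  have hAsub : ∀ s ∈ A, 0 ≤ s := by
    intro s hs
    have h0 := hl _ hs
    rw [dot_add_right, dot_add_right, hlx, hu, dot_smul_right] at h0
    simpa using nonneg_of_mul_nonneg_right (by linarith) hld
  have hAbdd : BddBelow A := ⟨0, fun s hs => hAsub s hs⟩
  have hAclosed : IsClosed A := by
    have hcont : Continuous fun s : ℝ => x + u + s • (e - x) :=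
      continuous_const.add (continuous_id.smul continuous_const)
    exact hC.preimage hcont
  set s₀ := sInf A with hs₀
  have hs₀A : s₀ ∈ A := hAclosed.csInf_mem hAne hAbdd
  have hs₀0 : 0 ≤ s₀ := hAsub _ hs₀A
  have hs₀t : s₀ ≤ t := csInf_le hAbdd hyC
  refine ⟨s₀, hs₀0, hs₀t, ?_⟩
  rw [hC.frontier_eq]
  refine ⟨hs₀A, fun hint => ?_⟩
  rw [mem_interior] at hint
  obtain ⟨V, hVC, hVopen, hVmem⟩ := hint
  obtain ⟨ε, hε, hballV⟩ := Metric.isOpen_iff.mp hVopen _ hVmem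
  set δ := ε / (2 * (‖e - x‖ + 1)) with hδ
  have hδ0 : 0 < δ := by positivity
  have hmem : x + u + (s₀ - δ) • (e - x) ∈ C := by
    apply hVC; apply hballV
    rw [Metric.mem_ball]
    have heq2 : x + u + (s₀ - δ) • (e - x) = (x + u + s₀ • (e - x)) - δ • (e - x) := by module
    rw [heq2, dist_eq_norm]
    have h1 : ‖x + u + s₀ • (e - x) - δ • (e - x) - (x + u + s₀ • (e - x))‖ = δ * ‖e - x‖ := by
      rw [show x + u + s₀ • (e - x) - δ • (e - x) - (x + u + s₀ • (e - x)) = -(δ • (e - x)) by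
        module]
      rw [norm_neg, norm_smul, Real.norm_eq_abs, abs_of_pos hδ0]
    rw [h1, hδ]
    rw [div_mul_eq_mul_div, div_lt_iff₀ (by positivity)]
    nlinarith [norm_nonneg (e - x)]
  have : s₀ ≤ s₀ - δ := csInf_le hAbdd hmem
  linarith

lemma support_is_grad_multiple {n : ℕ} {C : Set (Fin n → ℝ)} (hC : IsClosed C)
    (hconv : Convex ℝ C)
    {x e : Fin n → ℝ} {r : ℝ} (hr : 0 < r) (hball : Metric.ball e r ⊆ C)
    (hxf : x ∈ frontier C)
    {p : MvPolynomial (Fin n) ℝ} (hpf : ∀ y ∈ frontier C, eval y p = 0)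
    (hg : grad p x ≠ 0)
    {l : Fin n → ℝ} (hl : ∀ c ∈ C, 0 ≤ dot l c) (hlx : dot l x = 0) :
    ∃ c : ℝ, l = c • grad p x := by
  have hxC : x ∈ C := hC.closure_eq ▸ frontier_subset_closure hxf
  set g := grad p x with hg_def
  rcases eq_or_ne l 0 with rfl | hlne
  · exact ⟨0, by simp⟩
  have hll : 0 < dot l l := dot_self_pos hlne
  have hle : 0 < dot l e := by
    set δ := r / (2 * (‖l‖ + 1)) with hδ
    have hδ0 : 0 < δ := by positivity
    have hmem : e - δ • l ∈ C := by
      apply hball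
      rw [Metric.mem_ball, dist_eq_norm,
        show e - δ • l - e = -(δ • l) by module, norm_neg, norm_smul, Real.norm_eq_abs,
        abs_of_pos hδ0, hδ, div_mul_eq_mul_div, div_lt_iff₀ (by positivity)]
      nlinarith [norm_nonneg l]
    have h0 := hl _ hmem
    rw [dot_sub_right, dot_smul_right] at h0
    nlinarith
  have hld : 0 < dot l (e - x) := by rw [dot_sub_right, hlx]; linarith
  have key : ∀ u : Fin n → ℝ, dot l u = 0 → dot g u = 0 := by
    intro u hu
    rcases eq_or_ne u 0 with rfl | hune
    · exact dot_zero_right g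
    by_contra hgu
    set α := dot g u with hα
    set β := dot g (e - x) with hβ
    have hu0 : 0 < ‖u‖ := norm_pos_iff.mpr hune
    set K := ‖u‖ + 2 * ‖u‖ / r * ‖e - x‖ with hK
    have hK0 : 0 < K := by positivity
    have habs : ∀ ε' > 0, |α| ≤ ε' := by
      intro ε' hε'
      have hder := hasFDerivAt_eval p x
      rw [hasFDerivAt_iff_isLittleO_nhds_zero] at hder
      have hev := hder.def (show (0:ℝ) < ε'/K by positivity)
      obtain ⟨δ, hδ0, hδ⟩ := Metric.eventually_nhds_iff.mp hev
      set s := min (r / (2 * ‖u‖)) (δ / (2 * K)) with hs_def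
      have hs0 : 0 < s := lt_min (by positivity) (by positivity)
      have main : ∀ w : Fin n → ℝ, ‖w‖ = s * ‖u‖ → dot l w = 0 →
          ∃ τ, 0 ≤ τ ∧ |dot g w + τ * β| ≤ ε' * s := by
        intro w hw hlw
        have hwne : w ≠ 0 := by
          intro h; rw [h, norm_zero] at hw; nlinarith
        have hwr : 2 * ‖w‖ ≤ r := by
          have h1 : s ≤ r / (2 * ‖u‖) := min_le_left _ _
          rw [le_div_iff₀ (by positivity : (0:ℝ) < 2 * ‖u‖)] at h1
          rw [hw]
          nlinarith
        obtain ⟨τ, hτ0, hτle, hτf⟩ :=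
          exists_frontier_param hC hconv hxC hr hball hl hlx hld hlw hwne hwr
        have hτle' : τ ≤ s * (2 * ‖u‖) / r := by
          rw [hw] at hτle
          calc τ ≤ 2 * (s * ‖u‖) / r := hτle
          _ = s * (2 * ‖u‖) / r := by ring_nf
        have hyzero : eval (x + (w + τ • (e - x))) p = 0 := by
          have h := hpf _ hτf
          rwa [show x + w + τ • (e - x) = x + (w + τ • (e - x)) by module] at h
        have hxzero : eval x p = 0 := hpf _ hxf
        set v := w + τ • (e - x) with hv
        have hvnorm : ‖v‖ ≤ s * K := by
          calc ‖v‖ ≤ ‖w‖ + ‖τ • (e - x)‖ := norm_add_le _ _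
          _ = s * ‖u‖ + τ * ‖e - x‖ := by
            rw [hw, norm_smul, Real.norm_eq_abs, abs_of_nonneg hτ0]
          _ ≤ s * ‖u‖ + s * (2 * ‖u‖) / r * ‖e - x‖ := by
            have := mul_le_mul_of_nonneg_right hτle' (norm_nonneg (e - x))
            linarith
          _ = s * K := by rw [hK]; ring
        have hvδ : dist v (0 : Fin n → ℝ) < δ := by
          rw [dist_zero_right]
          have h1 : s ≤ δ / (2 * K) := min_le_right _ _
          have := mul_le_mul_of_nonneg_right h1 (le_of_lt hK0)
          rw [div_mul_eq_mul_div] at this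
          calc ‖v‖ ≤ s * K := hvnorm
          _ ≤ δ * K / (2 * K) := this
          _ = δ / 2 := by field_simp
          _ < δ := by linarith
        have hbound := hδ hvδ
        rw [hyzero, hxzero, dotCLM_apply] at hbound
        have hgv : dot g v = dot g w + τ * β := by
          rw [hv, dot_add_right, dot_smul_right, hβ]
        refine ⟨τ, hτ0, ?_⟩
        have h3 : (0:ℝ) - 0 - dot g v = -(dot g w + τ * β) := by rw [hgv]; ring
        rw [h3, Real.norm_eq_abs, abs_neg] at hbound
        calc |dot g w + τ * β| ≤ ε'/K * ‖v‖ := by simpa using hbound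
        _ ≤ ε'/K * (s * K) := by
          apply mul_le_mul_of_nonneg_left hvnorm (by positivity)
        _ = ε' * s := by field_simp
      obtain ⟨τ₁, hτ₁0, h1⟩ := main (s • u)
        (by rw [norm_smul, Real.norm_eq_abs, abs_of_pos hs0])
        (by rw [dot_smul_right, hu, mul_zero])
      obtain ⟨τ₂, hτ₂0, h2⟩ := main (-(s • u))
        (by rw [norm_neg, norm_smul, Real.norm_eq_abs, abs_of_pos hs0])
        (by rw [dot_neg_right, dot_smul_right, hu, mul_zero, neg_zero])
      rw [dot_smul_right, ← hα] at h1
      rw [dot_neg_right, dot_smul_right, ← hα] at h2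
      rw [abs_le] at h1 h2 ⊢
      obtain ⟨h1a, h1b⟩ := h1
      obtain ⟨h2a, h2b⟩ := h2
      rcases le_or_gt 0 β with hβ0 | hβ0
      · constructor
        · nlinarith [mul_nonneg hτ₂0 hβ0]
        · nlinarith [mul_nonneg hτ₁0 hβ0]
      · constructor
        · nlinarith [mul_nonpos_of_nonneg_of_nonpos hτ₁0 (le_of_lt hβ0)]
        · nlinarith [mul_nonpos_of_nonneg_of_nonpos hτ₂0 (le_of_lt hβ0)]
    have hα0 : α = 0 := by
      by_contra hαne
      have h1 := habs (|α|/2) (by positivity)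
      have h2 := abs_pos.mpr hαne
      linarith
    exact hgu hα0
  set k := dot g l / dot l l with hk_def
  have h1 : dot l (g - k • l) = 0 := by
    rw [dot_sub_right, dot_smul_right, hk_def, dot_comm l g]
    field_simp
    ring
  have h2 : dot g (g - k • l) = 0 := key _ h1
  have h3 : dot (g - k • l) (g - k • l) = 0 := by
    rw [dot_sub_left, dot_smul_left, h1, h2, mul_zero, sub_zero]
  have hgkl : g = k • l := eq_of_dot_self_sub h3
  have hk : k ≠ 0 := by
    intro h; rw [h, zero_smul] at hgkl; exact hg hgkl
  exact ⟨k⁻¹, by rw [hgkl, smul_smul, inv_mul_cancel₀ hk, one_smul]⟩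

end Aux

lemma exists_support {n : ℕ} {C : Set (Fin n → ℝ)} (hclosed : IsClosed C)
    (hconv : Convex ℝ C) (hscale : ∀ x ∈ C, ∀ t : ℝ, 0 ≤ t → t • x ∈ C)
    {e : Fin n → ℝ} (he : e ∈ interior C)
    {x : Fin n → ℝ} (hx : x ∈ frontier C) :
    ∃ l : Fin n → ℝ, l ≠ 0 ∧ (∀ c ∈ C, 0 ≤ dot l c) ∧ dot l x = 0 := by
  have hxC : x ∈ C := hclosed.closure_eq ▸ frontier_subset_closure hx
  have hxi : x ∉ interior C := by
    rw [hclosed.frontier_eq] at hx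
    exact hx.2
  obtain ⟨f, hf⟩ := geometric_hahn_banach_open_point (hconv.interior) isOpen_interior hxi
  set l : Fin n → ℝ := fun i => -(f (Pi.single i 1)) with hl_def
  have hrep : ∀ y : Fin n → ℝ, dot l y = -(f y) := by
    intro y
    have hy : y = ∑ i, Pi.single i (y i) := (Finset.univ_sum_single y).symm
    have : f y = ∑ i, y i * f (Pi.single i 1) := by
      conv_lhs => rw [hy]
      rw [map_sum]
      refine Finset.sum_congr rfl fun i _ => ?_
      have : Pi.single i (y i) = y i • Pi.single (M := fun _ : Fin n => ℝ) i 1 := by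
        rw [← Pi.single_smul, smul_eq_mul, mul_one]
      rw [this, map_smul, smul_eq_mul]
    rw [this]
    show ∑ i, l i * y i = _
    rw [← Finset.sum_neg_distrib]
    exact Finset.sum_congr rfl fun i _ => by rw [hl_def]; ring
  have hle : ∀ c ∈ C, f c ≤ f x := by
    intro c hc
    have htend : Filter.Tendsto (fun t : ℝ => f (c + t • (e - c))) (nhdsWithin 0 (Set.Ioi 0))
        (nhds (f c)) := by
      have hcont : Continuous fun t : ℝ => f (c + t • (e - c)) :=
        f.continuous.comp (continuous_const.add (continuous_id.smul continuous_const))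
      have := hcont.tendsto 0
      simp only [zero_smul, add_zero] at this
      exact this.mono_left nhdsWithin_le_nhds
    refine le_of_tendsto htend ?_
    filter_upwards [Ioc_mem_nhdsGT_of_mem (Set.mem_Ico.mpr ⟨le_rfl, zero_lt_one⟩)] with t ht
    exact le_of_lt (hf _ (hconv.add_smul_sub_mem_interior hc he ht))
  have hC0 : (0 : Fin n → ℝ) ∈ C := by
    have := hscale e (interior_subset he) 0 le_rfl
    rwa [zero_smul] at this
  have h2x : (2 : ℝ) • x ∈ C := hscale x hxC 2 (by norm_num)
  have hfx0 : f x = 0 := by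
    have h1 : (0:ℝ) ≤ f x := by simpa using hle 0 hC0
    have h2 : f ((2:ℝ) • x) ≤ f x := hle _ h2x
    rw [map_smul, smul_eq_mul] at h2
    linarith
  have hlne : l ≠ 0 := by
    intro h0
    have he' := hf e he
    rw [hfx0] at he'
    have : dot l e = -(f e) := hrep e
    rw [h0, dot_zero_left] at this
    linarith
  refine ⟨l, hlne, fun c hc => ?_, by rw [hrep, hfx0, neg_zero]⟩
  rw [hrep]
  have := hle c hc
  rw [hfx0] at this
  linarith

/-- The set of supporting functionals at a nonzero regular real point of the
algebraic boundary of `C` is an extreme ray of the dual cone. -/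
theorem supporting_functionals_at_regular_point_extreme_ray {n : ℕ}
    (C : Set (Fin (n + 1) → ℝ))
    (hsa : IsSemialgebraic C) (hclosed : IsClosed C) (hcone : IsPointedCone C)
    (hint : (interior C).Nonempty)
    (x : Fin (n + 1) → ℝ) (hx : x ∈ frontier C) (hxne : x ≠ 0)
    (hreg : ∃ p : MvPolynomial (Fin (n + 1)) ℝ,
      (∀ y ∈ frontier C, MvPolynomial.eval y p = 0) ∧ grad p x ≠ 0) :
    ∃ l0 ∈ dualCone C, l0 ≠ 0 ∧
      {l | l ∈ dualCone C ∧ dot l x = 0} = {m | ∃ t : ℝ, 0 ≤ t ∧ m = t • l0} ∧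
      SpansExtremeRay (dualCone C) l0 := by
  obtain ⟨p, hpf, hg⟩ := hreg
  obtain ⟨hconv, hscale, hpointed⟩ := hcone
  obtain ⟨e, he⟩ := hint
  obtain ⟨r, hr, hball⟩ := Metric.isOpen_iff.mp isOpen_interior e he
  have hballC : Metric.ball e r ⊆ C := hball.trans interior_subset
  have hxC : x ∈ C := hclosed.closure_eq ▸ frontier_subset_closure hx
  obtain ⟨l0, hl0ne, hl0C, hl0x⟩ := exists_support hclosed hconv hscale he hx
  have hA : ∀ l : Fin (n+1) → ℝ, (∀ c ∈ C, 0 ≤ dot l c) → dot l x = 0 →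
      ∃ c : ℝ, l = c • grad p x :=
    fun l hl hlx => support_is_grad_multiple hclosed hconv hr hballC hx hpf hg hl hlx
  obtain ⟨c₀, hc₀⟩ := hA l0 hl0C hl0x
  have hc₀ne : c₀ ≠ 0 := by intro h; rw [h, zero_smul] at hc₀; exact hl0ne hc₀
  have hl0e : 0 < dot l0 e := by
    set δ := r / (2 * (‖l0‖ + 1)) with hδ
    have hδ0 : 0 < δ := by positivity
    have hmem : e - δ • l0 ∈ C := by
      apply hballC
      rw [Metric.mem_ball, dist_eq_norm, show e - δ • l0 - e = -(δ • l0) by module, norm_neg,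
        norm_smul, Real.norm_eq_abs, abs_of_pos hδ0, hδ, div_mul_eq_mul_div,
        div_lt_iff₀ (by positivity)]
      nlinarith [norm_nonneg l0]
    have h0 := hl0C _ hmem
    rw [dot_sub_right, dot_smul_right] at h0
    nlinarith [dot_self_pos hl0ne]
  have hset : {l | l ∈ dualCone C ∧ dot l x = 0} = {m | ∃ t : ℝ, 0 ≤ t ∧ m = t • l0} := by
    ext l
    constructor
    · rintro ⟨hld, hlx⟩
      obtain ⟨c, hc⟩ := hA l hld hlx
      refine ⟨c / c₀, ?_, ?_⟩
      · have h1 : 0 ≤ dot l e := hld e (interior_subset he)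
        have h2 : dot l e = (c / c₀) * dot l0 e := by
          rw [hc, hc₀, dot_smul_left, dot_smul_left]
          field_simp
        rw [h2] at h1
        nlinarith
      · rw [hc, hc₀, smul_smul]
        congr 1
        field_simp
    · rintro ⟨t, ht, rfl⟩
      refine ⟨fun c hc => ?_, ?_⟩
      · rw [dot_smul_left]
        exact mul_nonneg ht (hl0C c hc)
      · rw [dot_smul_left, hl0x, mul_zero]
  refine ⟨l0, hl0C, hl0ne, hset, hl0ne, hl0C, ?_⟩
  intro y hy z hz hyz
  have hyx : 0 ≤ dot y x := hy x hxC
  have hzx : 0 ≤ dot z x := hz x hxC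
  have hsum : dot y x + dot z x = 0 := by rw [← dot_add_left, hyz, hl0x]
  have hymem : y ∈ {l | l ∈ dualCone C ∧ dot l x = 0} := ⟨hy, by linarith⟩
  have hzmem : z ∈ {l | l ∈ dualCone C ∧ dot l x = 0} := ⟨hz, by linarith⟩
  rw [hset] at hymem hzmem
  exact ⟨hymem, hzmem⟩
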